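/- Define Q : [0,1] × [0,2] → ℝ as follows. For 0 ≤ u ≤ 1/5: Q(u,v) = (1-u+2v)/2 if 0 ≤ v ≤ 2u; Q(u,v) = (2+3v)/4 if 2u ≤ v ≤ (1-u)/2; Q(u,v) = (4-2u-v)/4 if (1-u)/2 ≤ v ≤ (1+3u)/2; Q(u,v) = (14-7v)/12 if (1+3u)/2 ≤ v ≤ 2. For 1/5 ≤ u ≤ 1: Q(u,v) = (1-u+2v)/2 if 0 ≤ v ≤ (1-u)/2; Q(u,v) = 1-u if (1-u)/2 ≤ v ≤ 2u; Q(u,v) = (4-2u-v)/4 if 2u ≤ v ≤ (1+3u)/2; Q(u,v) = (14-7v)/12 if (1+3u)/2 ≤ v ≤ 2. Then (3/4)·∫₀¹∫₀² Q(u,v)² dv du = 77/320. (This is the first summand in the computation of S(W^{B,C₀}_{•,•,•}; x) in the proof of Theorem 3.1.) -/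

import Mathlib

open MeasureTheory intervalIntegral Set

private lemma int_quad (a b c d : ℝ) :
    ∫ v in a..b, (c + d*v)^2
      = c^2*(b-a) + c*d*(b^2-a^2) + d^2*(b^3-a^3)/3 := by
  have hF : ∀ v : ℝ, HasDerivAt (fun x : ℝ => c^2*x + c*d*x^2 + d^2*x^3/3)
      ((c + d*v)^2) v := by
    intro v
    have h := (((hasDerivAt_id v).const_mul (c^2)).add
        ((hasDerivAt_pow 2 v).const_mul (c*d))).add
        (((hasDerivAt_pow 3 v).const_mul (d^2)).div_const 3)
    refine h.congr_deriv ?_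
    push_cast
    ring
  rw [intervalIntegral.integral_eq_sub_of_hasDerivAt (fun x _ => hF x)
    ((by fun_prop : Continuous fun v : ℝ => (c + d*v)^2).intervalIntegrable a b)]
  ring

private lemma int_cubic (a b c0 c1 c2 c3 : ℝ) :
    ∫ x in a..b, (c0 + c1*x + c2*x^2 + c3*x^3)
      = c0*(b-a) + c1*(b^2-a^2)/2 + c2*(b^3-a^3)/3 + c3*(b^4-a^4)/4 := by
  have hF : ∀ v : ℝ, HasDerivAt
      (fun x : ℝ => c0*x + c1*x^2/2 + c2*x^3/3 + c3*x^4/4)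
      (c0 + c1*v + c2*v^2 + c3*v^3) v := by
    intro v
    have h := ((((hasDerivAt_id v).const_mul c0).add
        (((hasDerivAt_pow 2 v).const_mul c1).div_const 2)).add
        (((hasDerivAt_pow 3 v).const_mul c2).div_const 3)).add
        (((hasDerivAt_pow 4 v).const_mul c3).div_const 4)
    refine h.congr_deriv ?_
    push_cast
    ring
  rw [intervalIntegral.integral_eq_sub_of_hasDerivAt (fun x _ => hF x)
    ((by fun_prop : Continuous fun x : ℝ => c0 + c1*x + c2*x^2 + c3*x^3).intervalIntegrable a b)]
  ring

private lemma ii_of_eqOn {f g : ℝ → ℝ} {a b : ℝ} (hg : Continuous g)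
    (h : Set.EqOn f g (Set.uIcc a b)) : IntervalIntegrable f volume a b :=
  (hg.intervalIntegrable a b).congr <| by
    intro x hx
    exact (h (Set.uIoc_subset_uIcc hx)).symm

/-- The first summand `(3/4)·∫₀¹∫₀² (P(u,v)·C₀)² dv du = 77/320` in the computation of
`S(W^{B,C₀}_{•,•,•};x)` in the proof of Theorem 3.1: for any function `Q` agreeing with
the piecewise-linear intersection number `P(u,v)·C₀` on `[0,1] × [0,2]`, one has
`(3/4)·∫₀¹∫₀² Q(u,v)² dv du = 77/320`. -/
theorem stmt_14 (Q : ℝ → ℝ → ℝ)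
    (h₁ : ∀ u v, 0 ≤ u → u ≤ 1/5 → 0 ≤ v → v ≤ 2*u →
      Q u v = (1 - u + 2*v)/2)
    (h₂ : ∀ u v, 0 ≤ u → u ≤ 1/5 → 2*u ≤ v → v ≤ (1-u)/2 →
      Q u v = (2 + 3*v)/4)
    (h₃ : ∀ u v, 0 ≤ u → u ≤ 1/5 → (1-u)/2 ≤ v → v ≤ (1+3*u)/2 →
      Q u v = (4 - 2*u - v)/4)
    (h₄ : ∀ u v, 0 ≤ u → u ≤ 1/5 → (1+3*u)/2 ≤ v → v ≤ 2 →
      Q u v = (14 - 7*v)/12)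
    (h₅ : ∀ u v, 1/5 ≤ u → u ≤ 1 → 0 ≤ v → v ≤ (1-u)/2 →
      Q u v = (1 - u + 2*v)/2)
    (h₆ : ∀ u v, 1/5 ≤ u → u ≤ 1 → (1-u)/2 ≤ v → v ≤ 2*u →
      Q u v = 1 - u)
    (h₇ : ∀ u v, 1/5 ≤ u → u ≤ 1 → 2*u ≤ v → v ≤ (1+3*u)/2 →
      Q u v = (4 - 2*u - v)/4)
    (h₈ : ∀ u v, 1/5 ≤ u → u ≤ 1 → (1+3*u)/2 ≤ v → v ≤ 2 →
      Q u v = (14 - 7*v)/12) :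
    (3/4 : ℝ) * (∫ u in (0:ℝ)..1, ∫ v in (0:ℝ)..2, (Q u v) ^ 2) = 77/320 := by
  have key1 : Set.EqOn (fun u => ∫ v in (0:ℝ)..2, Q u v ^ 2)
      (fun u => 5/8 + 0*u + (-(11/8))*u^2 + (1/12)*u^3) (Set.uIcc 0 (1/5)) := by
    intro u hu
    rw [Set.uIcc_of_le (by norm_num)] at hu
    obtain ⟨hu0, hu5⟩ := hu
    have h0a : (0:ℝ) ≤ 2*u := by linarith
    have hab : 2*u ≤ (1-u)/2 := by linarith
    have hbc : (1-u)/2 ≤ (1+3*u)/2 := by linarith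
    have hc2 : (1+3*u)/2 ≤ 2 := by linarith
    have eq1 : Set.EqOn (fun v => Q u v ^ 2) (fun v => ((1-u)/2 + 1*v)^2)
        (Set.uIcc 0 (2*u)) := by
      intro v hv; rw [Set.uIcc_of_le h0a] at hv
      simp only [h₁ u v hu0 hu5 hv.1 hv.2]; ring
    have eq2 : Set.EqOn (fun v => Q u v ^ 2) (fun v => (1/2 + (3/4)*v)^2)
        (Set.uIcc (2*u) ((1-u)/2)) := by
      intro v hv; rw [Set.uIcc_of_le hab] at hv
      simp only [h₂ u v hu0 hu5 hv.1 hv.2]; ring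
    have eq3 : Set.EqOn (fun v => Q u v ^ 2) (fun v => ((4-2*u)/4 + (-(1/4))*v)^2)
        (Set.uIcc ((1-u)/2) ((1+3*u)/2)) := by
      intro v hv; rw [Set.uIcc_of_le hbc] at hv
      simp only [h₃ u v hu0 hu5 hv.1 hv.2]; ring
    have eq4 : Set.EqOn (fun v => Q u v ^ 2) (fun v => (7/6 + (-(7/12))*v)^2)
        (Set.uIcc ((1+3*u)/2) 2) := by
      intro v hv; rw [Set.uIcc_of_le hc2] at hv
      simp only [h₄ u v hu0 hu5 hv.1 hv.2]; ring
    have i1 := ii_of_eqOn (by fun_prop) eq1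
    have i2 := ii_of_eqOn (by fun_prop) eq2
    have i3 := ii_of_eqOn (by fun_prop) eq3
    have i4 := ii_of_eqOn (by fun_prop) eq4
    have split : (∫ v in (0:ℝ)..2, Q u v ^ 2)
        = (∫ v in (0:ℝ)..(2*u), Q u v ^ 2) + (∫ v in (2*u)..((1-u)/2), Q u v ^ 2)
          + (∫ v in ((1-u)/2)..((1+3*u)/2), Q u v ^ 2)
          + (∫ v in ((1+3*u)/2)..(2:ℝ), Q u v ^ 2) := by
      rw [intervalIntegral.integral_add_adjacent_intervals i1 i2,
        intervalIntegral.integral_add_adjacent_intervals (i1.trans i2) i3,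
        intervalIntegral.integral_add_adjacent_intervals ((i1.trans i2).trans i3) i4]
    simp only [split, intervalIntegral.integral_congr eq1,
      intervalIntegral.integral_congr eq2, intervalIntegral.integral_congr eq3,
      intervalIntegral.integral_congr eq4, int_quad]
    ring
  have key2 : Set.EqOn (fun u => ∫ v in (0:ℝ)..2, Q u v ^ 2)
      (fun u => 59/96 + (5/32)*u + (-(69/32))*u^2 + (133/96)*u^3)
      (Set.uIcc (1/5) 1) := by
    intro u hu
    rw [Set.uIcc_of_le (by norm_num)] at hu
    obtain ⟨hu5, hu1⟩ := hu
    have h0a : (0:ℝ) ≤ (1-u)/2 := by linarith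
    have hab : (1-u)/2 ≤ 2*u := by linarith
    have hbc : 2*u ≤ (1+3*u)/2 := by linarith
    have hc2 : (1+3*u)/2 ≤ 2 := by linarith
    have eq1 : Set.EqOn (fun v => Q u v ^ 2) (fun v => ((1-u)/2 + 1*v)^2)
        (Set.uIcc 0 ((1-u)/2)) := by
      intro v hv; rw [Set.uIcc_of_le h0a] at hv
      simp only [h₅ u v hu5 hu1 hv.1 hv.2]; ring
    have eq2 : Set.EqOn (fun v => Q u v ^ 2) (fun v => ((1-u) + 0*v)^2)
        (Set.uIcc ((1-u)/2) (2*u)) := by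
      intro v hv; rw [Set.uIcc_of_le hab] at hv
      simp only [h₆ u v hu5 hu1 hv.1 hv.2]; ring
    have eq3 : Set.EqOn (fun v => Q u v ^ 2) (fun v => ((4-2*u)/4 + (-(1/4))*v)^2)
        (Set.uIcc (2*u) ((1+3*u)/2)) := by
      intro v hv; rw [Set.uIcc_of_le hbc] at hv
      simp only [h₇ u v hu5 hu1 hv.1 hv.2]; ring
    have eq4 : Set.EqOn (fun v => Q u v ^ 2) (fun v => (7/6 + (-(7/12))*v)^2)
        (Set.uIcc ((1+3*u)/2) 2) := by
      intro v hv; rw [Set.uIcc_of_le hc2] at hv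
      simp only [h₈ u v hu5 hu1 hv.1 hv.2]; ring
    have i1 := ii_of_eqOn (by fun_prop) eq1
    have i2 := ii_of_eqOn (by fun_prop) eq2
    have i3 := ii_of_eqOn (by fun_prop) eq3
    have i4 := ii_of_eqOn (by fun_prop) eq4
    have split : (∫ v in (0:ℝ)..2, Q u v ^ 2)
        = (∫ v in (0:ℝ)..((1-u)/2), Q u v ^ 2) + (∫ v in ((1-u)/2)..(2*u), Q u v ^ 2)
          + (∫ v in (2*u)..((1+3*u)/2), Q u v ^ 2)
          + (∫ v in ((1+3*u)/2)..(2:ℝ), Q u v ^ 2) := by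
      rw [intervalIntegral.integral_add_adjacent_intervals i1 i2,
        intervalIntegral.integral_add_adjacent_intervals (i1.trans i2) i3,
        intervalIntegral.integral_add_adjacent_intervals ((i1.trans i2).trans i3) i4]
    simp only [split, intervalIntegral.integral_congr eq1,
      intervalIntegral.integral_congr eq2, intervalIntegral.integral_congr eq3,
      intervalIntegral.integral_congr eq4, int_quad]
    ring
  have o1 := ii_of_eqOn (f := fun u => ∫ v in (0:ℝ)..2, Q u v ^ 2) (by fun_prop) key1
  have o2 := ii_of_eqOn (f := fun u => ∫ v in (0:ℝ)..2, Q u v ^ 2) (by fun_prop) key2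
  have split : (∫ u in (0:ℝ)..1, ∫ v in (0:ℝ)..2, Q u v ^ 2)
      = (∫ u in (0:ℝ)..(1/5), ∫ v in (0:ℝ)..2, Q u v ^ 2)
        + (∫ u in (1/5:ℝ)..1, ∫ v in (0:ℝ)..2, Q u v ^ 2) := by
    rw [intervalIntegral.integral_add_adjacent_intervals o1 o2]
  rw [split, intervalIntegral.integral_congr key1, intervalIntegral.integral_congr key2,
    int_cubic, int_cubic]
  norm_num
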